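/- If P is a pointer list of length greater than 4 and cds(P) ≠ P, then cde(cds(P)) ≠ cds(P); i.e., after a nontrivial context-directed block swap, a context-directed excision is applicable. -/
import Mathlib


/-- A finite sequence of integers (0-indexed list) is a *pointer list*:
(1) even positive length; (2) unique index of minimum absolute value;
(3) unique index of maximum absolute value; (4) each intermediate absolute
value occurs at exactly one other index; (5) for each even (0-based) index i,
x i ≤ x (i+1) and x i * x (i+1) > 0; (6) for each even (0-based) index i no
entry has absolute value strictly between |x i| and |x (i+1)|. -/
def IsPointerList (P : List ℤ) : Prop :=
  P.length % 2 = 0 ∧ 0 < P.length ∧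
  (∃! i, i < P.length ∧ ∀ j < P.length, |P.getD i 0| ≤ |P.getD j 0|) ∧
  (∃! i, i < P.length ∧ ∀ j < P.length, |P.getD j 0| ≤ |P.getD i 0|) ∧
  (∀ i < P.length, (∃ j < P.length, |P.getD j 0| < |P.getD i 0|) →
      (∃ j < P.length, |P.getD i 0| < |P.getD j 0|) →
      ∃! j, j < P.length ∧ j ≠ i ∧ |P.getD j 0| = |P.getD i 0|) ∧
  (∀ i, i % 2 = 0 → i + 1 < P.length →
      P.getD i 0 ≤ P.getD (i+1) 0 ∧ 0 < P.getD i 0 * P.getD (i+1) 0) ∧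
  (∀ i, i % 2 = 0 → i + 1 < P.length →
      ¬ ∃ j < P.length,
        (|P.getD i 0| < |P.getD j 0| ∧ |P.getD j 0| < |P.getD (i+1) 0|) ∨
        (|P.getD (i+1) 0| < |P.getD j 0| ∧ |P.getD j 0| < |P.getD i 0|))

-- Context directed excision: delete the first adjacent equal pair, if any.
open Classical in
noncomputable def cde (P : List ℤ) : List ℤ :=
  if h : ∃ i, i + 1 < P.length ∧ P.getD i 0 = P.getD (i+1) 0 then
    P.take (Nat.find h) ++ P.drop (Nat.find h + 2)
  else P

-- Context directed reversal: for the minimal i admitting j > i with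
-- x i = -(x j) (and the minimal such j), reverse and negate the segment
-- from position i+1 through j.
open Classical in
noncomputable def cdr (P : List ℤ) : List ℤ :=
  if h : ∃ i, ∃ j, i < j ∧ j < P.length ∧ P.getD i 0 = -(P.getD j 0) then
    let i := Nat.find h
    let j := Nat.find (Nat.find_spec h)
    P.take (i+1) ++ (((P.drop (i+1)).take (j - i)).reverse.map (fun z => -z)) ++
      P.drop (j+1)
  else P

-- Context directed block swap: for the lexicographically least (i, j)
-- admitting k, ℓ with i < j < k < ℓ, x i = x k, x j = x ℓ, interchange
-- the blocks x_{i+1}..x_{j-1} and x_k..x_ℓ.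
open Classical in
noncomputable def cds (P : List ℤ) : List ℤ :=
  if h : ∃ i, ∃ j, ∃ k, ∃ l, i < j ∧ j < k ∧ k < l ∧ l < P.length ∧
      P.getD i 0 = P.getD k 0 ∧ P.getD j 0 = P.getD l 0 then
    let i := Nat.find h
    let j := Nat.find (Nat.find_spec h)
    let k := Nat.find (Nat.find_spec (Nat.find_spec h))
    let l := Nat.find (Nat.find_spec (Nat.find_spec (Nat.find_spec h)))
    P.take (i+1) ++ ((P.drop k).take (l - k + 1)) ++ ((P.drop j).take (k - j)) ++
      ((P.drop (i+1)).take (j - i - 1)) ++ P.drop (l+1)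
  else P

/-- The doubling map π: each entry z is replaced by (z, z+1) if z > 0
and by (z-1, z) if z < 0. -/
def piMap (M : List ℤ) : List ℤ :=
  M.flatMap (fun z => if 0 < z then [z, z + 1] else [z - 1, z])

/-- One step of the HNS algorithm: apply cde if applicable, else cds if
applicable, else cdr. -/
noncomputable def hnsStep (P : List ℤ) : List ℤ :=
  if cde P ≠ P then cde P else if cds P ≠ P then cds P else cdr P


open Classical in
lemma cde_ne_of_pair (Q : List ℤ) (m : ℕ) (hm : m + 1 < Q.length)
    (he : Q.getD m 0 = Q.getD (m+1) 0) : cde Q ≠ Q := by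
  have hx : ∃ i, i + 1 < Q.length ∧ Q.getD i 0 = Q.getD (i+1) 0 := ⟨m, hm, he⟩
  unfold cde
  rw [dif_pos hx]
  intro heq
  have hl := congrArg List.length heq
  have hn := (Nat.find_spec hx).1
  simp only [List.length_append, List.length_take, List.length_drop] at hl
  omega

/-- after a nontrivial cds on a pointer list of length > 4,
a cde is applicable. -/
theorem stmt10 (P : List ℤ) (hP : IsPointerList P) (hlen : 4 < P.length)
    (h : cds P ≠ P) :
    cde (cds P) ≠ cds P := by
  classical
  by_cases hx : ∃ i, ∃ j, ∃ k, ∃ l, i < j ∧ j < k ∧ k < l ∧ l < P.length ∧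
      P.getD i 0 = P.getD k 0 ∧ P.getD j 0 = P.getD l 0
  · set i := Nat.find hx with hidef
    set j := Nat.find (Nat.find_spec hx) with hjdef
    set k := Nat.find (Nat.find_spec (Nat.find_spec hx)) with hkdef
    set l := Nat.find (Nat.find_spec (Nat.find_spec (Nat.find_spec hx))) with hldef
    obtain ⟨hij, hjk, hkl, hllen, hik, hjl⟩ :=
      Nat.find_spec (Nat.find_spec (Nat.find_spec (Nat.find_spec hx)))
    set A := P.take (i+1) with hAdef
    set B := (P.drop k).take (l - k + 1) with hBdef
    set C := (P.drop j).take (k - j) with hCdef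
    set D := (P.drop (i+1)).take (j - i - 1) with hDdef
    set E := P.drop (l+1) with hEdef
    have hQ : cds P = A ++ B ++ C ++ D ++ E := by
      unfold cds
      rw [dif_pos hx]
    have hA : A.length = i + 1 := by
      simp only [hAdef, List.length_take]; omega
    have hB : B.length = l - k + 1 := by
      simp only [hBdef, List.length_take, List.length_drop]; omega
    have hC : C.length = k - j := by
      simp only [hCdef, List.length_take, List.length_drop]; omega
    have hD : D.length = j - i - 1 := by
      simp only [hDdef, List.length_take, List.length_drop]; omega
    have hE : E.length = P.length - (l + 1) := by
      simp only [hEdef, List.length_drop]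
    have hQlen : (cds P).length = P.length := by
      rw [hQ]; simp only [List.length_append, hA, hB, hC, hD, hE]; omega
    have b4 : i < A.length := by omega
    have b3 : i < (A ++ B).length := by simp only [List.length_append]; omega
    have b2 : i < (A ++ B ++ C).length := by simp only [List.length_append]; omega
    have b1 : i < (A ++ B ++ C ++ D).length := by simp only [List.length_append]; omega
    have c3 : i + 1 < (A ++ B).length := by
      simp only [List.length_append]; omega
    have c2 : i + 1 < (A ++ B ++ C).length := by simp only [List.length_append]; omega
    have c1 : i + 1 < (A ++ B ++ C ++ D).length := by simp only [List.length_append]; omega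
    have hiP : i < P.length := by omega
    have g1 : (cds P).getD i 0 = P.getD i 0 := by
      rw [hQ, List.getD_append _ _ _ _ b1, List.getD_append _ _ _ _ b2,
        List.getD_append _ _ _ _ b3, List.getD_append _ _ _ _ b4,
        List.getD_eq_getElem _ _ b4, List.getD_eq_getElem _ _ hiP]
      simp only [hAdef, List.getElem_take]
    have g2 : (cds P).getD (i+1) 0 = P.getD k 0 := by
      rw [hQ, List.getD_append _ _ _ _ c1, List.getD_append _ _ _ _ c2,
        List.getD_append _ _ _ _ c3,
        List.getD_append_right _ _ _ _ (by omega : A.length ≤ i + 1)]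
      have h0 : i + 1 - A.length = 0 := by omega
      have hb0 : 0 < B.length := by omega
      have hkP : k < P.length := by omega
      have hk0 : k < (P.drop k).length + k := by
        simp only [List.length_drop]; omega
      rw [h0, List.getD_eq_getElem _ _ hb0, List.getD_eq_getElem _ _ hkP]
      simp only [hBdef, List.getElem_take, List.getElem_drop, Nat.add_zero]
    have hpair : (cds P).getD i 0 = (cds P).getD (i+1) 0 := by
      rw [g1, g2, hik]
    exact cde_ne_of_pair _ i (by omega) hpair
  · exfalso
    apply h
    unfold cds
    rw [dif_neg hx]
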